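/- arXiv:2512.10649 — 3 statements merged into one kernel-verified Lean document; each statement's English description precedes it below -/
import Mathlib

section
/- The function g(n,m)=J(n)G̃₀(n,m)J(m) with G̃₀(n,m)=(1/(32√2))(2√2|n-m|-(2√2-3)^{|n-m|}) and J(n)=(-1)ⁿ is a fundamental solution of Δ²-16 on ℤ: for every m∈ℤ, ((Δ²-16)_n g(·,m))(n)=δ(n,m). -/
/-- The discrete bi-Laplacian `Δ²` on `ℤ` (five-point formula). -/
def biLap (φ : ℤ → ℝ) : ℤ → ℝ :=
  fun n => φ (n + 2) - 4 * φ (n + 1) + 6 * φ n - 4 * φ (n - 1) + φ (n - 2)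

/-- The kernel `G̃₀(n,m) = (1/(32√2)) (2√2 |n-m| - (2√2-3)^{|n-m|})`. -/
noncomputable def Gt₀ (n m : ℤ) : ℝ :=
  (1 / (32 * Real.sqrt 2)) *
    (2 * Real.sqrt 2 * ((|n - m| : ℤ) : ℝ) - (2 * Real.sqrt 2 - 3) ^ (n - m).natAbs)

/-- The conjugated kernel `g(n,m) = (-1)ⁿ G̃₀(n,m) (-1)ᵐ`. -/
noncomputable def gker (n m : ℤ) : ℝ := (-1 : ℝ) ^ n * Gt₀ n m * (-1 : ℝ) ^ m

/-- The five-point identity for `G̃₀` after conjugating away the signs. -/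
lemma keylem (n m : ℤ) :
    Gt₀ (n+2) m + 4*Gt₀ (n+1) m - 10*Gt₀ n m + 4*Gt₀ (n-1) m + Gt₀ (n-2) m
      = if n = m then 1 else 0 := by
  have hs : Real.sqrt 2 ^ 2 = 2 := Real.sq_sqrt (by norm_num)
  have hs0 : (0:ℝ) < Real.sqrt 2 := Real.sqrt_pos.mpr (by norm_num)
  unfold Gt₀
  rw [show n + 2 - m = (n - m) + 2 by ring, show n + 1 - m = (n - m) + 1 by ring,
      show n - 1 - m = (n - m) - 1 by ring, show n - 2 - m = (n - m) - 2 by ring,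
      if_congr (show (n = m) ↔ (n - m = 0) by omega) rfl rfl]
  generalize n - m = d
  simp only [Int.abs_eq_natAbs]
  by_cases h0 : d = 0
  · subst h0
    norm_num
    field_simp
    linear_combination (-8 : ℝ) * hs
  by_cases h1 : d = 1
  · subst h1
    norm_num
    field_simp
    linear_combination (20 - 8 * Real.sqrt 2) * hs
  by_cases hm1 : d = -1
  · subst hm1
    norm_num
    field_simp
    linear_combination (20 - 8 * Real.sqrt 2) * hs
  rw [if_neg h0]
  rcases (show 2 ≤ d ∨ d ≤ -2 by omega) with h | h
  · obtain ⟨a, rfl⟩ : ∃ a : ℕ, d = (a:ℤ) + 2 := ⟨(d-2).toNat, by omega⟩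
    rw [show ((a:ℤ)+2+2).natAbs = a + 4 by omega, show ((a:ℤ)+2+1).natAbs = a + 3 by omega,
        show ((a:ℤ)+2).natAbs = a + 2 by omega, show ((a:ℤ)+2-1).natAbs = a + 1 by omega,
        show ((a:ℤ)+2-2).natAbs = a by omega]
    push_cast
    rw [pow_add, pow_add, pow_add, pow_add]
    linear_combination
      (-(4 * (2*Real.sqrt 2 - 4)^2 * (2*Real.sqrt 2 - 3)^a) / (32 * Real.sqrt 2)) * hs
  · obtain ⟨a, rfl⟩ : ∃ a : ℕ, d = -((a:ℤ) + 2) := ⟨(-d-2).toNat, by omega⟩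
    rw [show (-((a:ℤ)+2)+2).natAbs = a by omega, show (-((a:ℤ)+2)+1).natAbs = a + 1 by omega,
        show (-((a:ℤ)+2)).natAbs = a + 2 by omega, show (-((a:ℤ)+2)-1).natAbs = a + 3 by omega,
        show (-((a:ℤ)+2)-2).natAbs = a + 4 by omega]
    push_cast
    rw [pow_add, pow_add, pow_add, pow_add]
    linear_combination
      (-(4 * (2*Real.sqrt 2 - 4)^2 * (2*Real.sqrt 2 - 3)^a) / (32 * Real.sqrt 2)) * hs

/-- `g = J G̃₀ J` is a fundamental solution of `Δ² - 16` on `ℤ`: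
`((Δ² - 16)_n g(·,m))(n) = δ(n,m)` for every `m ∈ ℤ`. -/
theorem stmt_6 (m n : ℤ) :
    biLap (fun k => gker k m) n - 16 * gker n m = if n = m then 1 else 0 := by
  have hne : (-1:ℝ) ≠ 0 := by norm_num
  have expand : biLap (fun k => gker k m) n - 16 * gker n m
      = ((-1:ℝ)^n * (-1:ℝ)^m) *
        (Gt₀ (n+2) m + 4*Gt₀ (n+1) m - 10*Gt₀ n m + 4*Gt₀ (n-1) m + Gt₀ (n-2) m) := by
    simp only [biLap, gker, zpow_add₀ hne, zpow_sub₀ hne]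
    norm_num
    ring
  rw [expand, keylem]
  by_cases h : n = m
  · subst h
    rw [if_pos rfl, ← mul_zpow]
    norm_num
  · rw [if_neg h, mul_zero]
end

section
/- Let G₁ be the operator on ℤ with kernel G₁(n,m)=(a + c(-1)^{n+m})(1/(|n|+|m|) + 1/(|n|-|m|))·1_{||n|-|m||≥2}(n,m), where a=(i-1)/8 and c∈ℝ. Let f_N=χ_{[-N,N]}. Then (G₁ f_N)(N+2) = 2a ∑_{k=2}^{2N+2} 1/k + 2c ∑_{k=2}^{2N+2} (-1)^k/k, and in particular |(G₁ f_N)(N+2)| → ∞ as N → ∞. -/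
/-- The kernel `G₁(n,m) = (a + c(-1)^{n+m})(1/(|n|+|m|) + 1/(|n|-|m|)) · 1_{||n|-|m|| ≥ 2}`,
with `a = (i-1)/8`. -/
noncomputable def G₁ (c : ℝ) (n m : ℤ) : ℂ :=
  ((Complex.I - 1) / 8 + (c : ℂ) * (-1 : ℂ) ^ (n + m)) *
    (((1 / (|(n : ℝ)| + |(m : ℝ)|) + 1 / (|(n : ℝ)| - |(m : ℝ)|)) : ℝ) : ℂ) *
    (if 2 ≤ |(|n| - |m| : ℤ)| then 1 else 0)

/-- The characteristic function of `[-N, N]`. -/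
def fN (N : ℕ) : ℤ → ℂ := fun n => if |n| ≤ (N : ℤ) then 1 else 0

lemma neg_one_zpow_flip (j m : ℤ) : (-1:ℂ)^(j+m) = (-1:ℂ)^(j-m) := by
  have h : (-1:ℂ)^(2*m) = 1 := by rw [zpow_mul]; norm_num
  calc (-1:ℂ)^(j+m) = (-1:ℂ)^(j-m) * (-1:ℂ)^(2*m) := by
        rw [← zpow_add₀ (by norm_num : (-1:ℂ) ≠ 0)]; ring_nf
    _ = (-1:ℂ)^(j-m) := by rw [h, mul_one]

lemma G₁_eval (c : ℝ) (N : ℕ) :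
    ∑' m : ℤ, G₁ c ((N : ℤ) + 2) m * fN N m
        = 2 * ((Complex.I - 1) / 8) * ∑ k ∈ Finset.Icc 2 (2 * N + 2), (1 / (k : ℂ))
          + 2 * (c : ℂ) * ∑ k ∈ Finset.Icc 2 (2 * N + 2), ((-1 : ℂ) ^ k / (k : ℂ)) := by
  set a : ℂ := (Complex.I - 1) / 8 with ha
  set s : Finset ℤ := Finset.Icc (-(N:ℤ)) N with hs
  have h0 : ∀ m ∉ s, G₁ c ((N : ℤ) + 2) m * fN N m = 0 := by
    intro m hm
    have : ¬ |m| ≤ (N:ℤ) := by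
      rw [abs_le]; simpa [hs, Finset.mem_Icc] using hm
    simp [fN, this]
  rw [tsum_eq_sum h0]
  have hterm : ∀ m ∈ s, G₁ c ((N : ℤ) + 2) m * fN N m
      = (a + (c:ℂ) * (-1:ℂ)^((N:ℤ)+2+m)) * (1/((N:ℂ)+2+(m:ℂ)))
        + (a + (c:ℂ) * (-1:ℂ)^((N:ℤ)+2+m)) * (1/((N:ℂ)+2-(m:ℂ))) := by
    intro m hm
    simp only [hs, Finset.mem_Icc] at hm
    have hm' : |m| ≤ (N:ℤ) := abs_le.mpr hm
    have habs1 : |((N:ℤ)+2)| = (N:ℤ)+2 := abs_of_nonneg (by positivity)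
    have hind : (2:ℤ) ≤ |(|(N:ℤ)+2| - |m|)| := by
      rw [habs1, abs_of_nonneg (by omega)]; omega
    have hcast : |((((N:ℤ)+2 : ℤ) : ℝ))| = (N:ℝ)+2 := by
      rw [abs_of_nonneg (by positivity)]; push_cast; ring
    unfold G₁ fN
    rw [if_pos hind, if_pos hm', hcast, mul_one, mul_one]
    rcases le_or_gt 0 m with h | h
    · have : |(m:ℝ)| = (m:ℝ) := abs_of_nonneg (by exact_mod_cast h)
      rw [this]; push_cast; ring
    · have : |(m:ℝ)| = -(m:ℝ) := abs_of_neg (by exact_mod_cast h)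
      rw [this]; push_cast; ring
  rw [Finset.sum_congr rfl hterm, Finset.sum_add_distrib]
  have h2 : ∑ m ∈ s, (a + (c:ℂ) * (-1:ℂ)^((N:ℤ)+2+m)) * (1/((N:ℂ)+2-(m:ℂ)))
      = ∑ m ∈ s, (a + (c:ℂ) * (-1:ℂ)^((N:ℤ)+2+m)) * (1/((N:ℂ)+2+(m:ℂ))) := by
    apply Finset.sum_nbij' (i := fun m => -m) (j := fun m => -m)
    · intro m hm; simp only [hs, Finset.mem_Icc] at hm ⊢; omega
    · intro m hm; simp only [hs, Finset.mem_Icc] at hm ⊢; omega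
    · intro m _; ring
    · intro m _; ring
    · intro m _
      rw [show (N:ℤ)+2+(-m) = (N:ℤ)+2-m from by ring, ← neg_one_zpow_flip]
      push_cast; ring
  rw [h2]
  have h1 : ∑ m ∈ s, (a + (c:ℂ) * (-1:ℂ)^((N:ℤ)+2+m)) * (1/((N:ℂ)+2+(m:ℂ)))
      = ∑ k ∈ Finset.Icc (2:ℤ) (2*N+2), (a + (c:ℂ) * (-1:ℂ)^k) * (1/(k:ℂ)) := by
    rw [show Finset.Icc (2:ℤ) (2*N+2)
        = s.map (addLeftEmbedding ((N:ℤ)+2)) from by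
      rw [hs, Finset.map_add_left_Icc]; congr 1 <;> ring, Finset.sum_map]
    apply Finset.sum_congr rfl
    intro m _
    simp only [addLeftEmbedding_apply]
    push_cast; ring_nf
  rw [h1]
  have h3 : ∑ k ∈ Finset.Icc (2:ℤ) (2*N+2), (a + (c:ℂ) * (-1:ℂ)^k) * (1/(k:ℂ))
      = ∑ k ∈ Finset.Icc (2:ℕ) (2*N+2), (a + (c:ℂ) * (-1:ℂ)^k) * (1/(k:ℂ)) := by
    refine Finset.sum_nbij' (i := fun k => k.toNat) (j := fun k => (k:ℤ)) ?_ ?_ ?_ ?_ ?_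
    · intro k hk; simp only [Finset.mem_Icc] at hk ⊢; omega
    · intro k hk; simp only [Finset.mem_Icc] at hk ⊢; omega
    · intro k hk; simp only [Finset.mem_Icc] at hk; omega
    · intro k _; simp
    · intro k hk
      simp only [Finset.mem_Icc] at hk
      have h : ((k.toNat : ℕ) : ℤ) = k := by omega
      rw [← h, zpow_natCast]
      simp only [Int.toNat_natCast, Int.cast_natCast]
  rw [h3]
  have h4 : ∀ k ∈ Finset.Icc (2:ℕ) (2*N+2),
      (a + (c:ℂ) * (-1:ℂ)^k) * (1/(k:ℂ)) = a * (1/(k:ℂ)) + (c:ℂ) * ((-1:ℂ)^k/(k:ℂ)) := by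
    intro k _; ring
  rw [Finset.sum_congr rfl h4, Finset.sum_add_distrib, ← Finset.mul_sum, ← Finset.mul_sum]
  ring

lemma harm_aux (M : ℕ) (hM : 1 ≤ M) :
    ∑ i ∈ Finset.range M, (1/((i:ℝ)+1)) = 1 + ∑ k ∈ Finset.Icc 2 M, (1/(k:ℝ)) := by
  induction M with
  | zero => omega
  | succ M ih =>
    rcases Nat.eq_or_lt_of_le hM with h1 | h1
    · simp [← h1]
    · have hM' : 1 ≤ M := by omega
      rw [Finset.sum_range_succ, ih hM', Finset.sum_Icc_succ_top (by omega : 2 ≤ M+1)]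
      push_cast; ring

lemma tendH : Filter.Tendsto
    (fun N : ℕ => (∑ k ∈ Finset.Icc 2 (2*N+2), (1/(k:ℝ))) / 4)
    Filter.atTop Filter.atTop := by
  have h1 : Filter.Tendsto (fun n : ℕ => ∑ i ∈ Finset.range n, (1/((i:ℝ)+1)))
      Filter.atTop Filter.atTop :=
    Real.tendsto_sum_range_one_div_nat_succ_atTop
  have h2 : Filter.Tendsto (fun N : ℕ => 2*N+2) Filter.atTop Filter.atTop :=
    Filter.tendsto_atTop_atTop.mpr fun b => ⟨b, fun a ha => by omega⟩
  have h3 : Filter.Tendsto (fun N : ℕ => ∑ i ∈ Finset.range (2*N+2), (1/((i:ℝ)+1)))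
      Filter.atTop Filter.atTop := h1.comp h2
  have h4 : (fun N : ℕ => (∑ k ∈ Finset.Icc 2 (2*N+2), (1/(k:ℝ))))
      = fun N : ℕ => (∑ i ∈ Finset.range (2*N+2), (1/((i:ℝ)+1))) + (-1) := by
    funext N; rw [harm_aux (2*N+2) (by omega)]; ring
  have h5 := Filter.tendsto_atTop_add_const_right Filter.atTop (-1 : ℝ) h3
  rw [← h4] at h5
  exact h5.atTop_div_const (by norm_num)

lemma imval (c hr ar : ℝ) :
    (2 * ((Complex.I - 1) / 8) * ((hr:ℝ):ℂ) + 2 * (c:ℂ) * ((ar:ℝ):ℂ)).im = hr / 4 := by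
  simp [Complex.add_im, Complex.mul_im, Complex.div_im]
  ring

/-- Explicit evaluation `(G₁ f_N)(N+2) = 2a ∑_{k=2}^{2N+2} 1/k + 2c ∑_{k=2}^{2N+2} (-1)^k/k`
with `a = (i-1)/8`; in particular `|(G₁ f_N)(N+2)| → ∞` as `N → ∞`. -/
theorem stmt_15 (c : ℝ) :
    (∀ N : ℕ, ∑' m : ℤ, G₁ c ((N : ℤ) + 2) m * fN N m
        = 2 * ((Complex.I - 1) / 8) * ∑ k ∈ Finset.Icc 2 (2 * N + 2), (1 / (k : ℂ))
          + 2 * (c : ℂ) * ∑ k ∈ Finset.Icc 2 (2 * N + 2), ((-1 : ℂ) ^ k / (k : ℂ))) ∧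
    Filter.Tendsto (fun N : ℕ => ‖∑' m : ℤ, G₁ c ((N : ℤ) + 2) m * fN N m‖)
      Filter.atTop Filter.atTop := by
  refine ⟨G₁_eval c, ?_⟩
  have hb : ∀ N : ℕ, (∑ k ∈ Finset.Icc 2 (2*N+2), (1/(k:ℝ))) / 4
      ≤ ‖∑' m : ℤ, G₁ c ((N : ℤ) + 2) m * fN N m‖ := by
    intro N
    rw [G₁_eval c N]
    have hH : ∑ k ∈ Finset.Icc 2 (2 * N + 2), (1 / (k : ℂ))
        = ((∑ k ∈ Finset.Icc 2 (2 * N + 2), (1/(k:ℝ)) : ℝ) : ℂ) := by push_cast; ring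
    have hA : ∑ k ∈ Finset.Icc 2 (2 * N + 2), ((-1:ℂ)^k / (k : ℂ))
        = ((∑ k ∈ Finset.Icc 2 (2 * N + 2), ((-1:ℝ)^k/(k:ℝ)) : ℝ) : ℂ) := by push_cast; ring
    rw [hH, hA]
    set z : ℂ := 2 * ((Complex.I - 1) / 8) *
        ((∑ k ∈ Finset.Icc 2 (2 * N + 2), (1/(k:ℝ)) : ℝ) : ℂ)
      + 2 * (c:ℂ) * ((∑ k ∈ Finset.Icc 2 (2 * N + 2), ((-1:ℝ)^k/(k:ℝ)) : ℝ) : ℂ) with hz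
    have him : z.im = (∑ k ∈ Finset.Icc 2 (2*N+2), (1/(k:ℝ))) / 4 := imval _ _ _
    have hnn : 0 ≤ (∑ k ∈ Finset.Icc 2 (2*N+2), (1/(k:ℝ))) / 4 := by
      apply div_nonneg _ (by norm_num)
      exact Finset.sum_nonneg fun k _ => by positivity
    calc (∑ k ∈ Finset.Icc 2 (2*N+2), (1/(k:ℝ))) / 4 = |z.im| := by
          rw [him, abs_of_nonneg hnn]
      _ ≤ ‖z‖ := Complex.abs_im_le_norm z
  exact Filter.tendsto_atTop_mono hb tendH
end

section
/- For a∈ℝ and θ₀∈(-π,0) determined by the phase Φ_{a,s}(θ)=√((2-2cos θ)²+a²) - sθ on [-π,0]: the cubic h_a(x)=4x³-8x²+(2a²+4)x+a² satisfies h_a(x)>0 for x∈[0,1], h_a(-1)=-a²-16<0, and h_a'(x)>0 for x<0; hence h_a has a unique root x₀ in [-1,1], and x₀∈(-1,0). -/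
private lemma hderiv (a : ℝ) (x : ℝ) :
    deriv (fun x : ℝ => 4 * x ^ 3 - 8 * x ^ 2 + (2 * a ^ 2 + 4) * x + a ^ 2) x
      = 12 * x ^ 2 - 16 * x + (2 * a ^ 2 + 4) := by
  have h1 := ((((hasDerivAt_pow 3 x).const_mul 4).sub
    ((hasDerivAt_pow 2 x).const_mul 8)).add
    ((hasDerivAt_id x).const_mul (2 * a ^ 2 + 4))).add_const (a ^ 2)
  simp only [id_eq, Nat.cast_ofNat, pow_one] at h1
  rw [show deriv (fun x : ℝ => 4 * x ^ 3 - 8 * x ^ 2 + (2 * a ^ 2 + 4) * x + a ^ 2) x = _ from h1.deriv]; push_cast; ring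

private lemma hpos (a : ℝ) (ha : a ≠ 0) :
    ∀ x ∈ Set.Icc (0 : ℝ) 1, 0 < 4 * x ^ 3 - 8 * x ^ 2 + (2 * a ^ 2 + 4) * x + a ^ 2 := by
  intro x hx
  obtain ⟨h0, h1⟩ := hx
  have ha2 : 0 < a ^ 2 := by positivity
  have key : 4 * x ^ 3 - 8 * x ^ 2 + (2 * a ^ 2 + 4) * x + a ^ 2
      = 4 * x * (x - 1) ^ 2 + a ^ 2 * (2 * x + 1) := by ring
  rw [key]
  have h2 : (0:ℝ) < 2 * x + 1 := by linarith
  nlinarith [sq_nonneg (x - 1)]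

private lemma hmono (a : ℝ) :
    StrictMonoOn (fun x : ℝ => 4 * x ^ 3 - 8 * x ^ 2 + (2 * a ^ 2 + 4) * x + a ^ 2)
      (Set.Icc (-1 : ℝ) 0) := by
  apply strictMonoOn_of_deriv_pos (convex_Icc _ _)
  · fun_prop
  · intro x hx
    rw [interior_Icc] at hx
    rw [hderiv]
    nlinarith [sq_nonneg x, sq_nonneg a, hx.2, hx.1]

/-- The cubic `h_a(x) = 4x³ - 8x² + (2a²+4)x + a²` controlling the critical points of the
second derivative of the phase `Φ_{a,s}`: it is positive on `[0,1]`, negative at `-1`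
(with value `-a² - 16`), strictly increasing on `(-∞, 0)`, and hence has a unique root `x₀`
in `[-1,1]`, which moreover lies in `(-1, 0)`. -/
theorem stmt_16 (a : ℝ) (ha : a ≠ 0) :
    (∀ x ∈ Set.Icc (0 : ℝ) 1, 0 < 4 * x ^ 3 - 8 * x ^ 2 + (2 * a ^ 2 + 4) * x + a ^ 2) ∧
    (4 * (-1 : ℝ) ^ 3 - 8 * (-1 : ℝ) ^ 2 + (2 * a ^ 2 + 4) * (-1) + a ^ 2 = -a ^ 2 - 16) ∧
    (-a ^ 2 - 16 < 0) ∧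
    (∀ x : ℝ, x < 0 →
      0 < deriv (fun x : ℝ => 4 * x ^ 3 - 8 * x ^ 2 + (2 * a ^ 2 + 4) * x + a ^ 2) x) ∧
    (∃! x₀ : ℝ, x₀ ∈ Set.Icc (-1 : ℝ) 1 ∧
      4 * x₀ ^ 3 - 8 * x₀ ^ 2 + (2 * a ^ 2 + 4) * x₀ + a ^ 2 = 0) ∧
    (∀ x₀ ∈ Set.Icc (-1 : ℝ) 1,
      4 * x₀ ^ 3 - 8 * x₀ ^ 2 + (2 * a ^ 2 + 4) * x₀ + a ^ 2 = 0 →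
        x₀ ∈ Set.Ioo (-1 : ℝ) 0) := by
  have ha2 : 0 < a ^ 2 := by positivity
  have hin : ∀ x₀ ∈ Set.Icc (-1 : ℝ) 1,
      4 * x₀ ^ 3 - 8 * x₀ ^ 2 + (2 * a ^ 2 + 4) * x₀ + a ^ 2 = 0 →
        x₀ ∈ Set.Ioo (-1 : ℝ) 0 := by
    intro x hx h0
    constructor
    · rcases lt_or_eq_of_le hx.1 with h | h
      · exact h
      · exfalso; rw [← h] at h0; nlinarith
    · by_contra h
      push_neg at h
      have := hpos a ha x ⟨h, hx.2⟩
      linarith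
  refine ⟨hpos a ha, by ring, by nlinarith, ?_, ?_, hin⟩
  · intro x hx
    rw [hderiv]
    nlinarith [sq_nonneg x, sq_nonneg a]
  · -- existence via IVT on [-1, 0]
    have hc : ContinuousOn (fun x : ℝ => 4 * x ^ 3 - 8 * x ^ 2 + (2 * a ^ 2 + 4) * x + a ^ 2)
        (Set.Icc (-1 : ℝ) 0) := by fun_prop
    have hle : (-1 : ℝ) ≤ 0 := by norm_num
    have hmem : (0 : ℝ) ∈ Set.Icc
        ((fun x : ℝ => 4 * x ^ 3 - 8 * x ^ 2 + (2 * a ^ 2 + 4) * x + a ^ 2) (-1))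
        ((fun x : ℝ => 4 * x ^ 3 - 8 * x ^ 2 + (2 * a ^ 2 + 4) * x + a ^ 2) 0) := by
      constructor <;> simp <;> nlinarith
    obtain ⟨x₀, hx₀, hfx₀⟩ := intermediate_value_Icc hle hc hmem
    refine ⟨x₀, ⟨⟨hx₀.1, le_trans hx₀.2 (by norm_num)⟩, hfx₀⟩, ?_⟩
    intro y ⟨hy, hfy⟩
    have hy' := hin y hy hfy
    have hx₀' : x₀ ∈ Set.Icc (-1:ℝ) 0 := hx₀
    have hy'' : y ∈ Set.Icc (-1:ℝ) 0 := ⟨le_of_lt hy'.1, le_of_lt hy'.2⟩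
    exact ((hmono a).injOn hy'' hx₀' (by simp [hfy, hfx₀])).symm ▸ rfl
end
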